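/- Let n, k, d, d' be natural numbers with n ≥ k. Consider the action of Perm(Fin n) on multi-channel tensors H : (Fin k → Fin n) → ℝ^d given by (σ • H)(s) = H(σ⁻¹ ∘ s). Then the real vector space of affine maps A : ((Fin k → Fin n) → ℝ^d) → ℝ^{d'} (maps of the form A(H) = L(H) + b with L linear and b ∈ ℝ^{d'}) satisfying A(σ • H) = A(H) for all σ and all H has dimension d·d'·B(k) + d', where B(k) is the k-th Bell number, i.e. the number of equivalence relations on Fin k. -/

import Mathlib

open Function Equiv Finset

namespace InvAffAux

instance setoidFinite (α : Type*) [Finite α] : Finite (Setoid α) :=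
  Finite.of_injective (fun s : Setoid α => s.r)
    (fun _ _ h => Setoid.ext (fun x y => iff_of_eq (congrFun (congrFun h x) y)))

variable {n k : ℕ}

lemma ker_comp (σ : Equiv.Perm (Fin n)) (s : Fin k → Fin n) :
    Setoid.ker (fun i => σ (s i)) = Setoid.ker s :=
  Setoid.ext fun _ _ => ⟨fun h => σ.injective h, fun h => congrArg σ h⟩

lemma exists_perm_of_ker_eq {s t : Fin k → Fin n} (h : Setoid.ker s = Setoid.ker t) :
    ∃ σ : Equiv.Perm (Fin n), ∀ i, σ (s i) = t i := by
  classical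
  have key : ∀ a b, s a = s b ↔ t a = t b := fun a b => Setoid.ext_iff.1 h a b
  let e : {x // x ∈ Set.range s} ≃ {x // x ∈ Set.range t} :=
    { toFun := fun x => ⟨t x.2.choose, Set.mem_range_self _⟩
      invFun := fun y => ⟨s y.2.choose, Set.mem_range_self _⟩
      left_inv := by
        rintro ⟨x, hx⟩
        apply Subtype.ext
        dsimp only
        generalize_proofs h1 h2
        have := (key _ _).2 h2.choose_spec
        rw [this, h1.choose_spec]
      right_inv := by
        rintro ⟨y, hy⟩
        apply Subtype.ext
        dsimp only
        generalize_proofs h1 h2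
        have := (key _ _).1 h2.choose_spec
        rw [this, h1.choose_spec] }
  refine ⟨e.extendSubtype, fun i => ?_⟩
  rw [Equiv.extendSubtype_apply_of_mem e (s i) (Set.mem_range_self i)]
  show t _ = t i
  generalize_proofs h1
  exact (key _ _).1 h1.choose_spec

lemma exists_ker_eq (hnk : k ≤ n) (r : Setoid (Fin k)) :
    ∃ s : Fin k → Fin n, Setoid.ker s = r := by
  classical
  letI : Fintype (Quotient r) := Quotient.fintype r
  have hcard : Fintype.card (Quotient r) ≤ Fintype.card (Fin n) := by
    calc Fintype.card (Quotient r) ≤ Fintype.card (Fin k) := Fintype.card_quotient_le r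
    _ ≤ Fintype.card (Fin n) := by simpa using hnk
  obtain ⟨f⟩ := Function.Embedding.nonempty_of_card_le hcard
  refine ⟨fun i => f (Quotient.mk r i), Setoid.ext fun a b => ?_⟩
  constructor
  · intro hh
    exact Quotient.exact (s := r) (f.injective hh)
  · intro hh
    exact congrArg f (Quotient.sound (s := r) hh)

noncomputable def rep (hnk : k ≤ n) (r : Setoid (Fin k)) : Fin k → Fin n :=
  (exists_ker_eq hnk r).choose

lemma ker_rep (hnk : k ≤ n) (r : Setoid (Fin k)) : Setoid.ker (rep hnk r) = r :=
  (exists_ker_eq hnk r).choose_spec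

variable {d : ℕ}

/-- basis tensor -/
noncomputable def E (s : Fin k → Fin n) (i : Fin d) : (Fin k → Fin n) → (Fin d → ℝ) :=
  Pi.single s (Pi.single i 1)

lemma decomp (H : (Fin k → Fin n) → (Fin d → ℝ)) :
    H = ∑ s : Fin k → Fin n, ∑ i : Fin d, H s i • E s i := by
  classical
  funext t j
  simp [E, Pi.single_apply, Finset.sum_apply, ite_apply, mul_ite, mul_one, mul_zero,
    Finset.sum_ite_eq, Finset.sum_ite_eq']

lemma E_comp (σ : Equiv.Perm (Fin n)) (s : Fin k → Fin n) (i : Fin d) :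
    (fun t => E s i (fun l => σ⁻¹ (t l))) = E (fun l => σ (s l)) i := by
  classical
  funext t
  simp only [E, Pi.single_apply]
  have hcond : ((fun l => σ⁻¹ (t l)) = s) ↔ (t = fun l => σ (s l)) := by
    constructor
    · intro hh; funext l
      have := congrFun hh l
      rw [← this]; simp
    · intro hh; funext l
      rw [congrFun hh l]; simp
  rw [if_congr hcond rfl rfl]



end InvAffAux

/-- The subspace of invariant affine layers on `d`-channel order-`k` tensors over `n` nodes:
maps `A : ((Fin k → Fin n) → ℝ^d) → ℝ^{d'}` of the form `A H = L H + b` with `L` linear and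
`b` a constant bias, satisfying `A (σ • H) = A H` for all node permutations `σ`, where
`(σ • H) s = H (σ⁻¹ ∘ s)`. -/
noncomputable def invariantAffineLayers (n k d d' : ℕ) :
    Submodule ℝ (((Fin k → Fin n) → (Fin d → ℝ)) → (Fin d' → ℝ)) where
  carrier := {A |
    (∃ (L : ((Fin k → Fin n) → (Fin d → ℝ)) →ₗ[ℝ] (Fin d' → ℝ)) (b : Fin d' → ℝ),
        ∀ H, A H = L H + b)
    ∧ ∀ (σ : Equiv.Perm (Fin n)) (H : (Fin k → Fin n) → (Fin d → ℝ)),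
        A (fun s => H (fun i => σ⁻¹ (s i))) = A H}
  add_mem' := by
    rintro a b ⟨⟨La, ba, hLa⟩, hainv⟩ ⟨⟨Lb, bb, hLb⟩, hbinv⟩
    refine ⟨⟨La + Lb, ba + bb, fun H => ?_⟩, fun σ H => ?_⟩
    · simp only [Pi.add_apply, hLa H, hLb H, LinearMap.add_apply]
      abel
    · simp only [Pi.add_apply, hainv σ H, hbinv σ H]
  zero_mem' := by
    refine ⟨⟨0, 0, fun H => ?_⟩, fun σ H => ?_⟩
    · simp
    · simp
  smul_mem' := by
    rintro c a ⟨⟨La, ba, hLa⟩, hainv⟩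
    refine ⟨⟨c • La, c • ba, fun H => ?_⟩, fun σ H => ?_⟩
    · simp only [Pi.smul_apply, hLa H, LinearMap.smul_apply, smul_add]
    · simp only [Pi.smul_apply, hainv σ H]


namespace InvAffAux

variable {d' : ℕ}

/-- the linear part of the reconstructed layer -/
noncomputable def mkL (c : Setoid (Fin k) × Fin d × Fin d' → ℝ) :
    ((Fin k → Fin n) → (Fin d → ℝ)) →ₗ[ℝ] (Fin d' → ℝ) where
  toFun H := fun j => ∑ s : Fin k → Fin n, ∑ i : Fin d, c (Setoid.ker s, i, j) * H s i
  map_add' H1 H2 := by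
    funext j
    simp [mul_add, Finset.sum_add_distrib]
  map_smul' r H := by
    funext j
    simp only [Pi.smul_apply, smul_eq_mul, RingHom.id_apply]
    rw [Finset.mul_sum]
    refine Finset.sum_congr rfl fun s _ => ?_
    rw [Finset.mul_sum]
    refine Finset.sum_congr rfl fun i _ => ?_
    ring

noncomputable def mkA (c : Setoid (Fin k) × Fin d × Fin d' → ℝ) (b : Fin d' → ℝ) :
    ((Fin k → Fin n) → (Fin d → ℝ)) → (Fin d' → ℝ) :=
  fun H j => (∑ s : Fin k → Fin n, ∑ i : Fin d, c (Setoid.ker s, i, j) * H s i) + b j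

lemma mkA_mem (c : Setoid (Fin k) × Fin d × Fin d' → ℝ) (b : Fin d' → ℝ) :
    mkA c b ∈ invariantAffineLayers n k d d' := by
  refine ⟨⟨mkL c, b, fun H => rfl⟩, fun σ H => ?_⟩
  funext j
  unfold mkA
  congr 1
  refine Fintype.sum_equiv (Equiv.arrowCongr (Equiv.refl (Fin k)) (σ⁻¹ : Equiv.Perm (Fin n))) _ _ (fun t => ?_)
  have harr : (Equiv.arrowCongr (Equiv.refl (Fin k)) (σ⁻¹ : Equiv.Perm (Fin n))) t
      = fun i => σ⁻¹ (t i) := by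
    funext i; simp
  rw [harr, ker_comp σ⁻¹ t]

noncomputable def theEquiv (n k d d' : ℕ) (hnk : k ≤ n) :
    (invariantAffineLayers n k d d') ≃ₗ[ℝ]
      ((Setoid (Fin k) × Fin d × Fin d' → ℝ) × (Fin d' → ℝ)) where
  toFun A := (fun p => (A : ((Fin k → Fin n) → (Fin d → ℝ)) → (Fin d' → ℝ)) (E (rep hnk p.1) p.2.1) p.2.2
      - (A : ((Fin k → Fin n) → (Fin d → ℝ)) → (Fin d' → ℝ)) 0 p.2.2,
    fun j => (A : ((Fin k → Fin n) → (Fin d → ℝ)) → (Fin d' → ℝ)) 0 j)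
  map_add' A B := by
    refine Prod.ext ?_ ?_
    · funext p
      simp only [Submodule.coe_add, Pi.add_apply, Prod.fst_add]
      ring
    · funext j
      simp [Prod.snd_add]
  map_smul' r A := by
    refine Prod.ext ?_ ?_
    · funext p
      simp only [Submodule.coe_smul, Pi.smul_apply, smul_eq_mul, RingHom.id_apply, Prod.smul_fst]
      ring
    · funext j
      simp [Prod.smul_snd]
  invFun x := ⟨mkA x.1 x.2, mkA_mem x.1 x.2⟩
  left_inv := by
    rintro ⟨a, ⟨⟨L, b, hA⟩, hinv⟩⟩
    apply Subtype.ext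
    funext H j
    show mkA _ _ H j = a H j
    unfold mkA
    dsimp only
    have key : ∀ (s : Fin k → Fin n) (i : Fin d),
        a (E (rep hnk (Setoid.ker s)) i) = a (E s i) := by
      intro s i
      obtain ⟨σ, hσ⟩ := exists_perm_of_ker_eq (ker_rep hnk (Setoid.ker s))
      have h1 := hinv σ (E (rep hnk (Setoid.ker s)) i)
      rw [E_comp σ (rep hnk (Setoid.ker s)) i] at h1
      have h2 : (fun l => σ (rep hnk (Setoid.ker s) l)) = s := funext hσ
      rw [h2] at h1
      exact h1.symm
    have ha0 : a 0 = b := by rw [hA 0, map_zero, zero_add]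
    have hterm : ∀ (s : Fin k → Fin n) (i : Fin d),
        a (E (rep hnk (Setoid.ker s)) i) j - a 0 j = L (E s i) j := by
      intro s i
      rw [key s i, hA (E s i), ha0]
      simp
    calc (∑ s : Fin k → Fin n, ∑ i : Fin d,
            (a (E (rep hnk (Setoid.ker s)) i) j - a 0 j) * H s i) + a 0 j
        = (∑ s : Fin k → Fin n, ∑ i : Fin d, L (E s i) j * H s i) + b j := by
          rw [ha0]
          congr 1
          exact Finset.sum_congr rfl fun s _ => Finset.sum_congr rfl fun i _ => by
            rw [← ha0, hterm s i]
      _ = L H j + b j := by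
          congr 1
          conv_rhs => rw [decomp H]
          rw [map_sum]
          rw [Finset.sum_apply]
          refine Finset.sum_congr rfl fun s _ => ?_
          rw [map_sum, Finset.sum_apply]
          refine Finset.sum_congr rfl fun i _ => ?_
          rw [map_smul]
          simp [mul_comm]
      _ = a H j := by rw [hA H]; simp
  right_inv := by
    classical
    rintro ⟨c, b⟩
    refine Prod.ext ?_ ?_
    · funext p
      obtain ⟨r, i, j⟩ := p
      show mkA c b (E (rep hnk r) i) j - mkA c b 0 j = c (r, i, j)
      unfold mkA
      simp only [Pi.zero_apply, mul_zero, Finset.sum_const_zero, zero_add, add_sub_cancel_right]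
      have : ∀ (s : Fin k → Fin n) (i' : Fin d),
          c (Setoid.ker s, i', j) * E (rep hnk r) i s i'
            = if s = rep hnk r then (if i' = i then c (Setoid.ker s, i', j) else 0) else 0 := by
        intro s i'
        simp [E, Pi.single_apply, ite_apply, mul_ite]
      rw [Finset.sum_congr rfl fun s _ => Finset.sum_congr rfl fun i' _ => this s i']
      simp [Finset.sum_ite_eq', ker_rep hnk r]
    · funext j
      show mkA c b 0 j = b j
      unfold mkA
      simp

end InvAffAux


/-- The space of invariant affine layers from `d`-channel order-`k` tensors over `n ≥ k`
nodes to `ℝ^{d'}` has dimension `d·d'·B(k) + d'`, where `B(k)` is the `k`-th Bell number,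
i.e. the number of equivalence relations on a `k`-element set. -/
theorem dim_invariant_affine_layers (n k d d' : ℕ) (hnk : k ≤ n) :
    Module.finrank ℝ (invariantAffineLayers n k d d')
      = d * d' * Nat.card (Setoid (Fin k)) + d' := by

  classical
  rw [(InvAffAux.theEquiv n k d d' hnk).finrank_eq]
  letI : Fintype (Setoid (Fin k)) := Fintype.ofFinite _
  rw [Module.finrank_prod, Module.finrank_pi, Module.finrank_pi,
    Nat.card_eq_fintype_card, Fintype.card_prod, Fintype.card_prod,
    Fintype.card_fin, Fintype.card_fin]
  ring
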